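/- For every natural number n, γ = (-1)^(n+1) · n! · (lim_{x→0} [(-1)^(n+1)/(n! x) + Γ(-n + x)]) + H_n. -/

import Mathlib

open Real Filter Topology Finset

local notation "γ" => Real.eulerMascheroniConstant

noncomputable def Paux (n : ℕ) : ℝ → ℝ := fun x => ∏ k ∈ Finset.range n, (x - (k + 1))

lemma Paux_zero_eq (n : ℕ) : Paux n 0 = (-1) ^ n * n.factorial := by
  induction n with
  | zero => simp [Paux]
  | succ n ih =>
    simp only [Paux, Finset.prod_range_succ] at ih ⊢
    rw [ih]
    push_cast [Nat.factorial_succ, pow_succ]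
    ring

lemma Paux_ne_zero {n : ℕ} {x : ℝ} (hx : |x| < 1) : Paux n x ≠ 0 := by
  refine Finset.prod_ne_zero_iff.mpr fun k _ => ?_
  have : (0:ℝ) < (k:ℝ) + 1 := by positivity
  have := abs_lt.mp hx
  intro h
  nlinarith [h]

lemma hasDerivAt_Paux (n : ℕ) :
    HasDerivAt (Paux n) ((-1) ^ (n + 1) * n.factorial * (harmonic n : ℝ)) 0 := by
  induction n with
  | zero =>
    have hP0 : Paux 0 = fun _ => (1:ℝ) := by funext x; simp [Paux]
    rw [hP0]; simpa using (hasDerivAt_const (0:ℝ) (1:ℝ))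
  | succ n ih =>
    have h2 : HasDerivAt (fun x : ℝ => x - ((n:ℝ) + 1)) 1 0 :=
      (hasDerivAt_id 0).sub_const _
    have := ih.mul h2
    have heq : ∀ x : ℝ, Paux (n + 1) x = Paux n x * (x - ((n:ℝ) + 1)) := by
      intro x; simp [Paux, Finset.prod_range_succ]
    rw [show (Paux n * fun x : ℝ => (x - ((n:ℝ)+1))) = Paux (n+1) from (funext fun x => (heq x).symm)] at this
    refine this.congr_deriv ?_
    rw [Paux_zero_eq]
    push_cast [Nat.factorial_succ, harmonic_succ, pow_succ]
    have hn1 : ((n:ℝ) + 1) ≠ 0 := by positivity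
    field_simp
    ring

lemma Gamma_sub_nat (n : ℕ) {x : ℝ} (hx : x ≠ 0) (hx1 : |x| < 1) :
    Real.Gamma (x + 1) = x * Paux n x * Real.Gamma (x - n) := by
  induction n with
  | zero => simp [Paux, Real.Gamma_add_one hx, mul_comm]
  | succ n ih =>
    have hne : x - ((n:ℝ) + 1) ≠ 0 := by
      have := abs_lt.mp hx1
      intro h
      nlinarith [h]
    have hrec := Real.Gamma_add_one hne
    have : x - ((n:ℝ) + 1) + 1 = x - n := by ring
    rw [this] at hrec
    rw [ih, hrec]
    simp only [Paux, Finset.prod_range_succ]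
    push_cast
    ring

theorem stmt_5 (n : ℕ) :
    Real.eulerMascheroniConstant =
      (-1) ^ (n + 1) * (n.factorial : ℝ) *
        limUnder (nhdsWithin 0 {0}ᶜ)
          (fun x : ℝ => (-1) ^ (n + 1) / (n.factorial * x) + Real.Gamma (-(n : ℝ) + x)) +
      (harmonic n : ℝ) := by
  set N : ℝ → ℝ := fun x => Real.Gamma (x + 1) + (-1) ^ (n + 1) / n.factorial * Paux n x with hN
  have hfac : (n.factorial : ℝ) ≠ 0 := Nat.cast_ne_zero.mpr n.factorial_ne_zero
  have hneg : ∀ m : ℕ, ((-1:ℝ)^m) * ((-1:ℝ)^m) = 1 := fun m => by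
    rw [← pow_add]; exact (Even.neg_one_pow ⟨m, by ring⟩)
  have hN0 : N 0 = 0 := by
    simp only [hN, zero_add, Real.Gamma_one, Paux_zero_eq, pow_succ]
    field_simp
    linear_combination (-1:ℝ) * hneg n
  have hNderiv : HasDerivAt N (-γ + (harmonic n : ℝ)) 0 := by
    have h1 : HasDerivAt (fun x : ℝ => Real.Gamma (x + 1)) (-γ) 0 := by
      exact HasDerivAt.comp_add_const (0:ℝ) 1 (by rw [zero_add]; exact Real.hasDerivAt_Gamma_one)
    have h2 := (hasDerivAt_Paux n).const_mul ((-1:ℝ) ^ (n + 1) / n.factorial)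
    have := h1.add h2
    refine this.congr_deriv ?_
    have e : (-1:ℝ)^(n+1)/n.factorial * ((-1)^(n+1) * n.factorial * (harmonic n:ℝ)) = harmonic n := by
      rw [div_mul_eq_mul_div, div_eq_iff hfac]
      linear_combination ((harmonic n : ℝ) * n.factorial) * hneg (n+1)
    linarith [e]
  -- limit of N x / x is N'(0)
  have hslope : Tendsto (fun x : ℝ => N x / x) (𝓝[≠] 0) (𝓝 (-γ + (harmonic n : ℝ))) := by
    have := hasDerivAt_iff_tendsto_slope.mp hNderiv
    refine this.congr' ?_
    filter_upwards [self_mem_nhdsWithin] with x hx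
    rw [slope_def_field, hN0, sub_zero, sub_zero]
  have hPcont : Tendsto (fun x : ℝ => (Paux n x)⁻¹) (𝓝[≠] 0) (𝓝 ((Paux n 0)⁻¹)) := by
    have hc : Continuous (Paux n) := by
      unfold Paux; exact continuous_finset_prod _ fun k _ => continuous_id.sub continuous_const
    exact ((hc.tendsto 0).inv₀ (Paux_ne_zero (by norm_num))).mono_left nhdsWithin_le_nhds
  have htend : Tendsto (fun x : ℝ => (-1) ^ (n + 1) / (n.factorial * x) + Real.Gamma (-(n : ℝ) + x))
      (𝓝[≠] 0) (𝓝 ((-γ + (harmonic n : ℝ)) * (Paux n 0)⁻¹)) := by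
    refine (hslope.mul hPcont).congr' ?_
    have h1 : {x : ℝ | |x| < 1} ∈ 𝓝[≠] (0:ℝ) := by
      apply nhdsWithin_le_nhds
      have : Metric.ball (0:ℝ) 1 ∈ 𝓝 (0:ℝ) := Metric.ball_mem_nhds _ one_pos
      convert this using 1
      ext x; simp [Real.dist_eq]
    filter_upwards [self_mem_nhdsWithin, h1] with x hx hx1
    have hx0 : x ≠ 0 := hx
    have hP := Paux_ne_zero (n := n) hx1
    have hG := Gamma_sub_nat n hx0 hx1
    have : Real.Gamma (-(n:ℝ) + x) = Real.Gamma (x + 1) / (x * Paux n x) := by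
      rw [show -(n:ℝ) + x = x - n by ring, hG]
      field_simp
    rw [this, hN]
    field_simp
    ring
  rw [htend.limUnder_eq, Paux_zero_eq]
  rw [pow_succ]
  field_simp
  nlinarith [hneg n]
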